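/- The polynomial Q_a(x) = x^d − 2(ax − 1)² has height 2a² for a ≥ 2 and d ≥ 5, and there is a constant C such that for all sufficiently large a, Q_a has two distinct roots at distance at most C·a^{−(d+2)/2}. -/

import Mathlib

/-- The naive height of an integer polynomial: the maximum of the absolute values
of its coefficients. -/
noncomputable def polyHeight (P : Polynomial ℤ) : ℕ :=
  (Finset.range (P.natDegree + 1)).sup fun i => (P.coeff i).natAbs

open Polynomial

private theorem mycoeff' (b c e : ℤ) (d : ℕ) (n : ℕ) :
    (X ^ d + C b * X^2 + C c * X + C e : ℤ[X]).coeff n =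
      (if n = d then 1 else 0) + (if n = 2 then b else 0)
      + (if n = 1 then c else 0) + (if n = 0 then e else 0) := by
  simp only [coeff_add, coeff_C_mul, coeff_X_pow, coeff_X, coeff_C, mul_ite, mul_one, mul_zero]
  rw [show (if 1 = n then c else 0) = (if n = 1 then c else 0) from if_congr eq_comm rfl rfl]

private theorem mydeg' (b c e : ℤ) (d : ℕ) (hd : 5 ≤ d) :
    (X ^ d + C b * X^2 + C c * X + C e : ℤ[X]).natDegree = d := by
  compute_degree!
  any_goals omega

private theorem bern_upper (x : ℝ) (hx : 0 ≤ x) :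
    ∀ n : ℕ, 2*n*x ≤ 1 → (1+x)^n ≤ 1 + 2*n*x := by
  intro n
  induction n with
  | zero => simp
  | succ n ih =>
    intro h
    push_cast at h ⊢
    have hn : 2*(n:ℝ)*x ≤ 1 := by nlinarith
    have h2 := ih hn
    have hx1 : (0:ℝ) ≤ 1 + x := by linarith
    calc (1+x)^(n+1) = (1+x)^n * (1+x) := by ring
      _ ≤ (1 + 2*n*x) * (1+x) := by nlinarith [pow_nonneg hx1 n]
      _ ≤ 1 + 2*((n:ℝ)+1)*x := by nlinarith

open Polynomial in
theorem Qa_height_and_close_roots (d : ℕ) (hd : 5 ≤ d) :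
    (∀ a : ℤ, 2 ≤ a → (polyHeight (X ^ d - Polynomial.C 2 * (Polynomial.C a * X - 1) ^ 2) : ℤ) = 2 * a ^ 2) ∧
    ∃ C : ℝ, ∃ A : ℤ, ∀ a : ℤ, A ≤ a →
      ∃ x₁ x₂ : ℂ, x₁ ≠ x₂ ∧
        Polynomial.aeval x₁ (X ^ d - Polynomial.C 2 * (Polynomial.C a * X - 1) ^ 2 : Polynomial ℤ) = 0 ∧
        Polynomial.aeval x₂ (X ^ d - Polynomial.C 2 * (Polynomial.C a * X - 1) ^ 2 : Polynomial ℤ) = 0 ∧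
        ‖x₁ - x₂‖ ≤ C * (a : ℝ) ^ (-((d : ℝ) + 2) / 2) := by
  constructor
  · -- height part
    intro a ha
    have hP : (X ^ d - C 2 * (C a * X - 1) ^ 2 : ℤ[X]) =
        X ^ d + C (-(2*a^2)) * X^2 + C (4*a) * X + C (-2) := by
      simp only [map_neg, map_mul, map_pow, map_ofNat]
      ring
    rw [hP]
    have hdeg := mydeg' (-(2*a^2)) (4*a) (-2) d hd
    have key : polyHeight (X ^ d + C (-(2*a^2)) * X^2 + C (4*a) * X + C (-2)) =
        (2*a^2).natAbs := by
      unfold polyHeight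
      rw [hdeg]
      apply le_antisymm
      · apply Finset.sup_le
        intro i _
        rw [mycoeff']
        have ht1 : 4*a ≤ 2*a^2 := by nlinarith
        have ht2 : (2:ℤ) ≤ 2*a^2 := by nlinarith
        generalize hgen : 2*a^2 = t at *
        split_ifs <;> omega
      · have h2 : 2 ∈ Finset.range (d+1) := by
          simp; omega
        have hle := Finset.le_sup (f := fun i => ((X ^ d + C (-(2*a^2)) * X^2 + C (4*a) * X + C (-2) : ℤ[X]).coeff i).natAbs) h2
        have heq : (2*a^2).natAbs = ((X ^ d + C (-(2*a^2)) * X^2 + C (4*a) * X + C (-2) : ℤ[X]).coeff 2).natAbs := by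
          rw [mycoeff']
          simp [show (2:ℕ) ≠ d by omega]
        rw [heq]
        exact hle
    rw [key]
    exact Int.natAbs_of_nonneg (by positivity)
  · -- close roots part
    refine ⟨2, 2*(d:ℤ)+2, fun a ha => ?_⟩
    have hd5 : (5:ℝ) ≤ (d:ℝ) := by exact_mod_cast hd
    set α : ℝ := (a:ℝ) with hαdef
    have hαd : 2*(d:ℝ)+2 ≤ α := by
      have h := ha
      have : ((2*(d:ℤ)+2 : ℤ):ℝ) ≤ ((a:ℤ):ℝ) := by exact_mod_cast h
      push_cast at this; linarith
    have hα : (12:ℝ) ≤ α := by linarith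
    have hα0 : (0:ℝ) < α := by linarith
    have hα1 : (1:ℝ) ≤ α := by linarith
    set e : ℝ := -((d:ℝ)+2)/2 with hedef
    set δ : ℝ := α ^ e with hδdef
    have hδ0 : 0 < δ := Real.rpow_pos_of_pos hα0 e
    have hαδ : α * δ = α ^ (1 + e) := by
      rw [hδdef, Real.rpow_add hα0, Real.rpow_one]
    have hαδ_small : α * δ ≤ 1/α := by
      rw [hαδ]
      have h1 : α ^ (1 + e) ≤ α ^ (-1:ℝ) := by
        apply Real.rpow_le_rpow_of_exponent_le hα1
        rw [hedef]; linarith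
      rw [Real.rpow_neg_one, ← one_div] at h1
      exact h1
    have hαδ_pos : 0 < α * δ := by positivity
    have hδα : δ < 1/α := by
      have h1 : α * δ < 1 := by
        have : (1:ℝ)/α ≤ 1/12 := by
          apply one_div_le_one_div_of_le <;> linarith
        linarith
      rw [lt_div_iff₀ hα0]
      linarith [mul_comm δ α ▸ h1]
    have hp1 : δ^2 = α^(e*2) := by
      rw [hδdef, Real.rpow_mul (le_of_lt hα0) e 2]
      norm_num [Real.rpow_natCast]
    have hp2 : (α:ℝ)^(2:ℕ) = α^((2:ℝ)) := by
      rw [← Real.rpow_natCast α 2]; norm_num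
    have hprod : α^2 * δ^2 = α ^ (-(d:ℝ)) := by
      rw [hp1, hp2, ← Real.rpow_add hα0]
      congr 1
      rw [hedef]; ring
    have hinv : (1/α)^d = α ^ (-(d:ℝ)) := by
      rw [Real.rpow_neg (le_of_lt hα0), Real.rpow_natCast, one_div, inv_pow]
    set f : ℝ → ℝ := fun x => x^d - 2*(α*x-1)^2 with hfdef
    have hfc : Continuous f := by fun_prop
    have hfmid : 0 < f (1/α) := by
      show 0 < (1/α)^d - 2*(α*(1/α)-1)^2
      have h1 : α * (1/α) - 1 = 0 := by field_simp; ring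
      rw [h1]
      have : (0:ℝ) < (1/α)^d := by positivity
      nlinarith
    have hbern : (1 + α*δ)^d < 2 := by
      have hb := bern_upper (α*δ) (le_of_lt hαδ_pos) d
      have hstrict : 2*(d:ℝ)*(α*δ) < 1 := by
        have h2 : 2*(d:ℝ) ≤ α - 2 := by linarith
        have h3 : 2*(d:ℝ)*(α*δ) ≤ (α-2)*(1/α) :=
          mul_le_mul h2 hαδ_small (le_of_lt hαδ_pos) (by linarith)
        have h4 : (α-2)*(1/α) < 1 := by
          rw [mul_one_div]
          rw [div_lt_one hα0]
          linarith
        linarith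
      have := hb (le_of_lt hstrict)
      linarith
    have hfplus : f (1/α + δ) < 0 := by
      show (1/α + δ)^d - 2*(α*(1/α + δ)-1)^2 < 0
      have h1 : α * (1/α + δ) - 1 = α*δ := by field_simp; ring
      rw [h1]
      have h2 : (1/α + δ)^d = α ^ (-(d:ℝ)) * (1+α*δ)^d := by
        have hsplit : 1/α + δ = (1/α) * (1 + α*δ) := by field_simp
        rw [hsplit, mul_pow, hinv]
      rw [h2]
      have h3 : (α*δ)^2 = α^2 * δ^2 := by ring
      rw [h3, hprod]
      have hpos : (0:ℝ) < α ^ (-(d:ℝ)) := Real.rpow_pos_of_pos hα0 _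
      nlinarith [hbern, hpos]
    have hfminus : f (1/α - δ) < 0 := by
      show (1/α - δ)^d - 2*(α*(1/α - δ)-1)^2 < 0
      have h1 : α * (1/α - δ) - 1 = -(α*δ) := by field_simp; ring
      rw [h1]
      have h2 : (1/α - δ)^d ≤ (1/α)^d := by
        apply pow_le_pow_left₀ (by linarith) (by linarith)
      have h3 : (-(α*δ))^2 = α^2*δ^2 := by ring
      rw [h3, hprod]
      rw [hinv] at h2
      have hpos : (0:ℝ) < α ^ (-(d:ℝ)) := Real.rpow_pos_of_pos hα0 _
      linarith
    obtain ⟨x₁, hx₁mem, hx₁⟩ := intermediate_value_Icc (by linarith : 1/α - δ ≤ 1/α)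
      hfc.continuousOn (Set.mem_Icc.mpr ⟨le_of_lt hfminus, le_of_lt hfmid⟩)
    obtain ⟨x₂, hx₂mem, hx₂⟩ := intermediate_value_Icc' (by linarith : 1/α ≤ 1/α + δ)
      hfc.continuousOn (Set.mem_Icc.mpr ⟨le_of_lt hfplus, le_of_lt hfmid⟩)
    obtain ⟨hx₁l, hx₁r⟩ := Set.mem_Icc.mp hx₁mem
    obtain ⟨hx₂l, hx₂r⟩ := Set.mem_Icc.mp hx₂mem
    have hne : x₁ ≠ x₂ := by
      intro hcon
      have h1 : x₁ ≠ 1/α := fun h => by rw [h] at hx₁; rw [hx₁] at hfmid; exact lt_irrefl _ hfmid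
      have h2 : x₂ ≠ 1/α := fun h => by rw [h] at hx₂; rw [hx₂] at hfmid; exact lt_irrefl _ hfmid
      have hl1 : x₁ < 1/α := lt_of_le_of_ne hx₁r h1
      have hl2 : 1/α < x₂ := lt_of_le_of_ne hx₂l (Ne.symm h2)
      rw [hcon] at hl1
      linarith
    have hroot : ∀ x : ℝ, f x = 0 →
        aeval (x:ℂ) (X ^ d - C 2 * (C a * X - 1) ^ 2 : ℤ[X]) = 0 := by
      intro x hx
      have hx' : x^d - 2*(α*x-1)^2 = 0 := hx
      have heval : aeval (x:ℂ) (X ^ d - C 2 * (C a * X - 1) ^ 2 : ℤ[X])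
          = ((x^d - 2*((a:ℝ)*x-1)^2 : ℝ) : ℂ) := by
        simp only [map_sub, map_mul, map_pow, map_one, aeval_X, aeval_C, map_ofNat,
          algebraMap_int_eq, eq_intCast, map_intCast]
        push_cast
        ring
      rw [heval, show (x^d - 2*((a:ℝ)*x-1)^2 : ℝ) = 0 from hx']
      norm_num
    refine ⟨x₁, x₂, by exact_mod_cast hne, hroot x₁ hx₁, hroot x₂ hx₂, ?_⟩
    have habs : ‖(x₁:ℂ) - (x₂:ℂ)‖ = |x₁ - x₂| := by
      rw [← Complex.ofReal_sub, Complex.norm_real, Real.norm_eq_abs]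
    rw [habs, abs_le]
    constructor <;> linarith
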